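/- Let (Ω, F, P) be a probability space, H : Ω → ℝ measurable with H ≥ 0 almost surely, y > 0, and K_l < K_u real numbers. Let U : ℝ → ℝ be concave and differentiable, and let I : (0,∞) → ℝ satisfy U'(I(y·H(ω))) = y·H(ω) for almost every ω. Define X̂(ω) := min(K_u, max(K_l, I(y·H(ω)))), which equals I(y·H(ω)) + max(K_l − I(y·H(ω)), 0) − max(I(y·H(ω)) − K_u, 0). Suppose X : Ω → ℝ is measurable with K_l ≤ X ≤ K_u almost surely, the functions U∘X, U∘X̂, H·X and H·X̂ are integrable, and E[H·X] = E[H·X̂]. Then E[U(X)] ≤ E[U(X̂)]. -/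

import Mathlib

open MeasureTheory Real

private lemma grad_ineq {U : ℝ → ℝ} (hUconc : ConcaveOn ℝ Set.univ U)
    (hUdiff : Differentiable ℝ U) (a b : ℝ) :
    U a - U b ≤ deriv U b * (a - b) := by
  have hconv : ConvexOn ℝ Set.univ (-U) := hUconc.neg
  have hder : ∀ x, deriv (-U) x = -deriv U x := fun x => by
    change deriv (fun z => -U z) x = _; rw [deriv.fun_neg]
  rcases lt_trichotomy a b with h | rfl | h
  · have := hconv.slope_le_deriv (Set.mem_univ a) (Set.mem_univ b) h ((hUdiff b).neg)
    rw [slope_def_field, hder] at this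
    simp only [Pi.neg_apply] at this
    have hba : (0:ℝ) < b - a := by linarith
    rw [div_le_iff₀ hba] at this
    nlinarith
  · simp
  · have := hconv.deriv_le_slope (Set.mem_univ b) (Set.mem_univ a) h ((hUdiff b).neg)
    rw [slope_def_field, hder] at this
    simp only [Pi.neg_apply] at this
    have hab : (0:ℝ) < a - b := by linarith
    rw [le_div_iff₀ hab] at this
    nlinarith

private lemma deriv_anti {U : ℝ → ℝ} (hUconc : ConcaveOn ℝ Set.univ U)
    (hUdiff : Differentiable ℝ U) : Antitone (deriv U) := by
  have hconv : ConvexOn ℝ Set.univ (-U) := hUconc.neg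
  have hder : ∀ x, deriv (-U) x = -deriv U x := fun x => by
    change deriv (fun z => -U z) x = _; rw [deriv.fun_neg]
  have hmono := hconv.monotoneOn_deriv (fun x _ => (hUdiff x).neg)
  intro a b hab
  have := hmono (Set.mem_univ a) (Set.mem_univ b) hab
  rw [hder, hder] at this
  simpa using this

/-- Optimality of the doubly truncated candidate terminal wealth under a lower constraint `K_l`
and an upper constraint `K_u`: with `X̂ = min(K_u, max(K_l, I(yH)))`, which equals
`I(yH) + max(K_l - I(yH), 0) - max(I(yH) - K_u, 0)`, and `U'(I(yH)) = yH` a.e., any `X` with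
`K_l ≤ X ≤ K_u` a.e. satisfying the same budget constraint has `E[U(X)] ≤ E[U(X̂)]`. -/
theorem stmt_13 {Ω : Type*} [MeasurableSpace Ω] (P : Measure Ω) [IsProbabilityMeasure P]
    (H : Ω → ℝ) (hHmeas : Measurable H) (hHnonneg : ∀ᵐ ω ∂P, 0 ≤ H ω)
    (y : ℝ) (hy : 0 < y) (Kl Ku : ℝ) (hK : Kl < Ku)
    (U : ℝ → ℝ) (hUconc : ConcaveOn ℝ Set.univ U) (hUdiff : Differentiable ℝ U)
    (I : ℝ → ℝ) (hI : ∀ᵐ ω ∂P, deriv U (I (y * H ω)) = y * H ω)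
    (Xhat : Ω → ℝ) (hXhat : ∀ ω, Xhat ω = min Ku (max Kl (I (y * H ω))))
    (X : Ω → ℝ) (hXmeas : Measurable X)
    (hXbounds : ∀ᵐ ω ∂P, Kl ≤ X ω ∧ X ω ≤ Ku)
    (hint1 : Integrable (fun ω => U (X ω)) P)
    (hint2 : Integrable (fun ω => U (Xhat ω)) P)
    (hint3 : Integrable (fun ω => H ω * X ω) P)
    (hint4 : Integrable (fun ω => H ω * Xhat ω) P)
    (hbudget : ∫ ω, H ω * X ω ∂P = ∫ ω, H ω * Xhat ω ∂P) :
    (∀ ω, Xhat ω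
        = I (y * H ω) + max (Kl - I (y * H ω)) 0 - max (I (y * H ω) - Ku) 0)
    ∧ ∫ ω, U (X ω) ∂P ≤ ∫ ω, U (Xhat ω) ∂P := by
  constructor
  · intro ω
    rw [hXhat ω]
    simp only [max_def, min_def]
    split_ifs <;> linarith
  · have key : ∀ᵐ ω ∂P,
        U (X ω) ≤ U (Xhat ω) + y * (H ω * X ω - H ω * Xhat ω) := by
      filter_upwards [hI, hXbounds] with ω hIω hXb
      set t := I (y * H ω) with ht
      have hgrad := grad_ineq hUconc hUdiff (X ω) (Xhat ω)
      have hanti := deriv_anti hUconc hUdiff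
      have hmain : deriv U (Xhat ω) * (X ω - Xhat ω)
          ≤ y * H ω * (X ω - Xhat ω) := by
        rcases le_total t Kl with h1 | h1
        · have hXe : Xhat ω = Kl := by
            rw [hXhat ω, max_eq_left h1, min_eq_right hK.le]
          have hd : deriv U Kl ≤ y * H ω := hIω ▸ hanti h1
          rw [hXe]
          exact mul_le_mul_of_nonneg_right hd (by linarith [hXb.1])
        · rcases le_total Ku t with h2 | h2
          · have hXe : Xhat ω = Ku := by
              rw [hXhat ω, min_eq_left (le_max_of_le_right h2)]
            have hd : y * H ω ≤ deriv U Ku := hIω ▸ hanti h2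
            rw [hXe]
            exact mul_le_mul_of_nonpos_right hd (by linarith [hXb.2])
          · have hXe : Xhat ω = t := by
              rw [hXhat ω, max_eq_right h1, min_eq_right h2]
            rw [hXe, hIω]
      nlinarith [hgrad, hmain]
    have hsub : Integrable (fun ω => H ω * X ω - H ω * Xhat ω) P := hint3.sub hint4
    have hmul : Integrable (fun ω => y * (H ω * X ω - H ω * Xhat ω)) P := hsub.const_mul y
    have hRint : Integrable
        (fun ω => U (Xhat ω) + y * (H ω * X ω - H ω * Xhat ω)) P :=
      hint2.add hmul
    calc ∫ ω, U (X ω) ∂P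
        ≤ ∫ ω, (U (Xhat ω) + y * (H ω * X ω - H ω * Xhat ω)) ∂P :=
          integral_mono_ae hint1 hRint key
      _ = ∫ ω, U (Xhat ω) ∂P
            + y * (∫ ω, H ω * X ω ∂P - ∫ ω, H ω * Xhat ω ∂P) := by
          rw [integral_add hint2 hmul, integral_const_mul,
            integral_sub hint3 hint4]
      _ = ∫ ω, U (Xhat ω) ∂P := by rw [hbudget]; ring
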